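/- If β_n = 1 for all n, then for every real c, lim_{n → ∞} d_n(t_n + c·w_n) = 2·e^{−c}; that is, the sequence has a profile cutoff at (t_n, w_n) with profile F(c) = 2e^{−c}. -/

import Mathlib

open Filter Real
open scoped Topology
open intervalIntegral

/-- `ℓ_n = log(n / log n)`. -/
noncomputable def ell (n : ℕ) : ℝ := Real.log (n / Real.log n)

/-- Distance to equilibrium of the Ornstein–Uhlenbeck example of Barrera–Ycart:
`d_n(t) = Σ_{i=1}^{9^n} a_{i,n} e^{-ρ_{i,n} t}` with `a_{1,n} = e^n`,
`ρ_{1,n} = n/(1 + (β_n/n) ℓ_n)`, and for `2 ≤ i ≤ 9^n`: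
`a_{i,n} = e^{-n}`, `ρ_{i,n} = log(e^n + (i-1) e^{-n})`. -/
noncomputable def dCut (β : ℕ → ℝ) (n : ℕ) (t : ℝ) : ℝ :=
  Real.exp n * Real.exp (-((n : ℝ) / (1 + β n / n * ell n)) * t) +
    ∑ i ∈ Finset.Icc (2 : ℕ) (9 ^ n),
      Real.exp (-(n : ℝ)) *
        Real.exp (-Real.log (Real.exp n + ((i : ℝ) - 1) * Real.exp (-(n : ℝ))) * t)

/-- Cutoff location `t_n = 1 + β_n ℓ_n / n`. -/
noncomputable def cutT (β : ℕ → ℝ) (n : ℕ) : ℝ := 1 + β n * ell n / n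

/-- Window width `w_n = t_n / n`. -/
noncomputable def cutW (β : ℕ → ℝ) (n : ℕ) : ℝ := cutT β n / n

/-- Correction term `r_n = ℓ_n w_n`. -/
noncomputable def cutR (β : ℕ → ℝ) (n : ℕ) : ℝ := ell n * cutW β n

noncomputable def BYt (c : ℝ) (n : ℕ) : ℝ := (1 + ell n / n) * (1 + c / n)
noncomputable def BYD (c : ℝ) (n : ℕ) : ℝ := ell n + c + ell n * c / n
noncomputable def BYg (c : ℝ) (n : ℕ) (i : ℕ) : ℝ :=
  (Real.exp n + ((i : ℝ) - 1) * Real.exp (-(n:ℝ))) ^ (1 - BYt c n)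

lemma key_eq (t : ℝ) (ht : 1 < t) (u v : ℝ) (hu : 0 < u) (huv : u ≤ v) :
    u ^ (1-t) - v ^ (1-t) = (t-1) * ∫ x in u..v, x ^ (-t) := by
  have h0 : (0:ℝ) ∉ Set.uIcc u v := by
    intro h
    rw [Set.mem_uIcc] at h
    rcases h with ⟨h1,h2⟩|⟨h1,h2⟩ <;> linarith
  rw [integral_rpow (Or.inr ⟨by intro h; linarith, h0⟩)]
  have h1 : -t + 1 = 1 - t := by ring
  have h2 : (1:ℝ) - t ≠ 0 := by intro h; linarith
  rw [h1]
  field_simp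
  ring

lemma key_ineq (t : ℝ) (ht : 1 < t) (u v : ℝ) (hu : 0 < u) (huv : u ≤ v) :
    (t-1) * ((v - u) * v ^ (-t)) ≤ u ^ (1-t) - v ^ (1-t) ∧
    u ^ (1-t) - v ^ (1-t) ≤ (t-1) * ((v - u) * u ^ (-t)) := by
  have h0 : (0:ℝ) ∉ Set.uIcc u v := by
    intro h
    rw [Set.mem_uIcc] at h
    rcases h with ⟨h1,h2⟩|⟨h1,h2⟩ <;> linarith
  have hInt : IntervalIntegrable (fun x : ℝ => x ^ (-t)) MeasureTheory.volume u v :=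
    intervalIntegral.intervalIntegrable_rpow (Or.inr h0)
  have ht1 : (0:ℝ) ≤ t - 1 := by linarith
  have hlow : (v - u) * v ^ (-t) ≤ ∫ x in u..v, x ^ (-t) := by
    have h1 : (v - u) * v ^ (-t) = ∫ _ in u..v, v ^ (-t) := by
      rw [integral_const, smul_eq_mul]
    rw [h1]
    apply integral_mono_on huv (by simp) hInt
    intro x hx
    exact Real.rpow_le_rpow_of_nonpos (lt_of_lt_of_le hu hx.1) hx.2 (by linarith)
  have hhigh : (∫ x in u..v, x ^ (-t)) ≤ (v - u) * u ^ (-t) := by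
    have h1 : (v - u) * u ^ (-t) = ∫ _ in u..v, u ^ (-t) := by
      rw [integral_const, smul_eq_mul]
    rw [h1]
    apply integral_mono_on huv hInt (by simp)
    intro x hx
    exact Real.rpow_le_rpow_of_nonpos hu hx.1 (by linarith)
  rw [key_eq t ht u v hu huv]
  exact ⟨mul_le_mul_of_nonneg_left hlow ht1, mul_le_mul_of_nonneg_left hhigh ht1⟩

lemma BY_log_pos {n : ℕ} (hn : 2 ≤ n) : 0 < Real.log n :=
  Real.log_pos (by exact_mod_cast Nat.one_lt_cast.mpr (by omega))

lemma BY_npos {n : ℕ} (hn : 2 ≤ n) : (0:ℝ) < n := by exact_mod_cast (by omega : 0 < n)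

lemma BY_ell_eq {n : ℕ} (hn : 2 ≤ n) :
    ell n = Real.log n - Real.log (Real.log n) := by
  unfold ell
  rw [Real.log_div (by positivity) (ne_of_gt (BY_log_pos hn))]

lemma BY_ell_pos {n : ℕ} (hn : 2 ≤ n) : 0 < ell n := by
  apply Real.log_pos
  rw [lt_div_iff₀ (BY_log_pos hn), one_mul]
  have h := Real.log_le_sub_one_of_pos (BY_npos hn)
  have : (1:ℝ) ≤ (n:ℝ) := by exact_mod_cast (by omega : 1 ≤ n)
  linarith

lemma BY_hN : Tendsto (fun n : ℕ => (n:ℝ)) atTop atTop := tendsto_natCast_atTop_atTop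

lemma BY_hL : Tendsto (fun n : ℕ => Real.log n) atTop atTop :=
  Real.tendsto_log_atTop.comp BY_hN

lemma BY_hlogx : Tendsto (fun x : ℝ => Real.log x / x) atTop (𝓝 0) := by
  simpa using Real.tendsto_pow_log_div_mul_add_atTop 1 0 1 one_ne_zero

lemma BY_hLL : Tendsto (fun n : ℕ => Real.log (Real.log n) / Real.log n) atTop (𝓝 0) :=
  BY_hlogx.comp BY_hL

lemma BY_hLn : Tendsto (fun n : ℕ => Real.log n / n) atTop (𝓝 0) :=
  BY_hlogx.comp BY_hN

lemma BY_ell_div_L : Tendsto (fun n : ℕ => ell n / Real.log n) atTop (𝓝 1) := by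
  have h : Tendsto (fun n : ℕ => 1 - Real.log (Real.log n) / Real.log n) atTop (𝓝 1) := by
    simpa using tendsto_const_nhds.sub BY_hLL
  apply h.congr'
  filter_upwards [eventually_ge_atTop 2] with n hn
  rw [BY_ell_eq hn, sub_div, div_self (ne_of_gt (BY_log_pos hn))]

lemma BY_ell_top : Tendsto ell atTop atTop := by
  have h := BY_hL.atTop_mul_pos one_pos
    (by simpa using tendsto_const_nhds.sub BY_hLL :
      Tendsto (fun n : ℕ => 1 - Real.log (Real.log n) / Real.log n) atTop (𝓝 1))
  apply h.congr'
  filter_upwards [eventually_ge_atTop 2] with n hn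
  have h1 := ne_of_gt (BY_log_pos hn)
  rw [BY_ell_eq hn]
  field_simp

lemma BY_ell_div_n : Tendsto (fun n : ℕ => ell n / n) atTop (𝓝 0) := by
  have h : Tendsto (fun n : ℕ => Real.log n / n
      - Real.log (Real.log n) / Real.log n * (Real.log n / n)) atTop (𝓝 0) := by
    simpa using BY_hLn.sub (BY_hLL.mul BY_hLn)
  apply h.congr'
  filter_upwards [eventually_ge_atTop 2] with n hn
  have h1 := ne_of_gt (BY_log_pos hn)
  rw [BY_ell_eq hn]
  field_simp

lemma BY_exp_neg_ell {n : ℕ} (hn : 2 ≤ n) : Real.exp (-ell n) = Real.log n / n := by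
  unfold ell
  rw [Real.exp_neg, Real.exp_log (div_pos (by positivity) (BY_log_pos hn)), inv_div]

lemma BY_hrem (c : ℝ) : Tendsto (fun n : ℕ => ell n * c / n) atTop (𝓝 0) := by
  have := BY_ell_div_n.mul_const c
  simp only [zero_mul] at this
  exact this.congr fun n => by ring

lemma BY_cn (c : ℝ) : Tendsto (fun n : ℕ => c / n) atTop (𝓝 0) := by
  have := BY_hN.inv_tendsto_atTop.const_mul c
  simp only [mul_zero] at this
  exact this.congr fun n => by simp [div_eq_mul_inv]

lemma BY_cL (c : ℝ) : Tendsto (fun n : ℕ => c / Real.log n) atTop (𝓝 0) := by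
  have := BY_hL.inv_tendsto_atTop.const_mul c
  simp only [mul_zero] at this
  exact this.congr fun n => by simp [div_eq_mul_inv]

lemma BY_D_top (c : ℝ) : Tendsto (BYD c) atTop atTop := by
  have h1 : Tendsto (fun n : ℕ => ell n + c) atTop atTop :=
    tendsto_atTop_add_const_right _ c BY_ell_top
  have h2 := BY_hrem c
  apply tendsto_atTop_add_right_of_le' atTop (-1 : ℝ) h1
  filter_upwards [h2.eventually (lt_mem_nhds (show (-1:ℝ) < 0 by norm_num))] with n hn
  exact hn.le

lemma BY_t_lim (c : ℝ) : Tendsto (BYt c) atTop (𝓝 1) := by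
  have := ((tendsto_const_nhds (x := (1:ℝ))).add BY_ell_div_n).mul ((tendsto_const_nhds (x := (1:ℝ))).add (BY_cn c))
  simp at this
  exact this

lemma BY_LD (c : ℝ) : Tendsto (fun n : ℕ => Real.log n / BYD c n) atTop (𝓝 1) := by
  have hDL : Tendsto (fun n : ℕ => BYD c n / Real.log n) atTop (𝓝 1) := by
    have h := (BY_ell_div_L.add (BY_cL c)).add (BY_ell_div_L.mul (BY_cn c))
    norm_num at h
    apply h.congr fun n => ?_
    unfold BYD
    ring
  have h2 := hDL.inv₀ one_ne_zero
  norm_num at h2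
  exact h2

lemma BY_t_sub {c : ℝ} {n : ℕ} (hn : 2 ≤ n) : BYt c n - 1 = BYD c n / n := by
  have h : (n:ℝ) ≠ 0 := ne_of_gt (BY_npos hn)
  unfold BYt BYD
  field_simp
  ring

lemma BY_nt {c : ℝ} {n : ℕ} (hn : 2 ≤ n) : (n:ℝ) * (1 - BYt c n) = -BYD c n := by
  have h : (n:ℝ) ≠ 0 := ne_of_gt (BY_npos hn)
  unfold BYt BYD
  field_simp
  ring

lemma BY_t_gt (c : ℝ) : ∀ᶠ n in atTop, 1 < BYt c n := by
  filter_upwards [(BY_D_top c).eventually_gt_atTop 0, eventually_ge_atTop 2] with n hD hn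
  have := BY_t_sub (c := c) hn
  nlinarith [BY_npos hn, div_pos hD (BY_npos hn)]

lemma BY_hA (c : ℝ) :
    Tendsto (fun n : ℕ => Real.exp ((n:ℝ) * (1 - BYt c n)) / (BYt c n - 1)) atTop
      (𝓝 (Real.exp (-c))) := by
  have hexp : Tendsto (fun n : ℕ => Real.exp (-(c + ell n * c / n))) atTop
      (𝓝 (Real.exp (-c))) := by
    apply (Real.continuous_exp.tendsto _).comp
    have := (tendsto_const_nhds (x := c)).add (BY_hrem c)
    norm_num at this
    exact this.neg
  have h := hexp.mul (BY_LD c)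
  rw [mul_one] at h
  apply h.congr'
  filter_upwards [(BY_D_top c).eventually_gt_atTop 0, eventually_ge_atTop 2] with n hD hn
  have hn0 : (n:ℝ) ≠ 0 := ne_of_gt (BY_npos hn)
  have hD0 : BYD c n ≠ 0 := ne_of_gt hD
  rw [BY_t_sub hn, BY_nt hn]
  have hsplit : -BYD c n = -ell n + -(c + ell n * c / n) := by unfold BYD; ring
  rw [hsplit, Real.exp_add, BY_exp_neg_ell hn]
  field_simp

lemma BY_E_bot (c : ℝ) :
    Tendsto (fun n : ℕ => Real.log n - 11/10 * BYD c n) atTop atBot := by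
  have h1 : Tendsto (fun n : ℕ => Real.log n * (-(1/10) + 11/10 * (Real.log (Real.log n) / Real.log n)))
      atTop atBot := by
    apply BY_hL.atTop_mul_neg (show (-(1/10):ℝ) + 11/10 * 0 < 0 by norm_num)
    exact tendsto_const_nhds.add (BY_hLL.const_mul _)
  have h2 : Tendsto (fun n : ℕ => -(11/10) * (c + ell n * c / n)) atTop
      (𝓝 (-(11/10) * (c + 0))) := ((tendsto_const_nhds (x := c)).add (BY_hrem c)).const_mul _
  have h3 := tendsto_atBot_add_right_of_ge' (g := fun n : ℕ => -(11/10) * (c + ell n * c / (n:ℝ))) atTop (-(11/10) * (c + 0) + 1) h1 ?_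
  · apply h3.congr'
    filter_upwards [eventually_ge_atTop 2] with n hn
    have hL0 : Real.log n ≠ 0 := ne_of_gt (BY_log_pos hn)
    show Real.log n * _ + _ = _
    rw [BYD, BY_ell_eq hn]
    field_simp
    ring
  · filter_upwards [h2.eventually (gt_mem_nhds (lt_add_one _))] with n hn
    exact hn.le

lemma BY_hC0 (c : ℝ) :
    Tendsto (fun n : ℕ => Real.exp (11/10 * (n:ℝ) * (1 - BYt c n)) / (BYt c n - 1)) atTop
      (𝓝 0) := by
  have h := (Real.tendsto_exp_atBot.comp (BY_E_bot c)).mul (BY_D_top c).inv_tendsto_atTop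
  rw [mul_zero] at h
  apply h.congr'
  filter_upwards [(BY_D_top c).eventually_gt_atTop 0, eventually_ge_atTop 2] with n hD hn
  have hn0 : (n:ℝ) ≠ 0 := ne_of_gt (BY_npos hn)
  have hD0 : BYD c n ≠ 0 := ne_of_gt hD
  show Real.exp (Real.log n - 11/10 * BYD c n) * (BYD c n)⁻¹ = _
  rw [BY_t_sub hn]
  have h1 : 11/10 * (n:ℝ) * (1 - BYt c n) = -(11/10 * BYD c n) := by
    nlinarith [BY_nt (c := c) hn]
  rw [h1, Real.exp_sub, Real.exp_log (BY_npos hn), Real.exp_neg]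
  have hY := (Real.exp_pos (11/10 * BYD c n)).ne'
  field_simp

lemma BY_exp21 : Real.exp (21/10) < 8.2 := by
  have h1 : Real.exp (21/10) ^ (10:ℕ) = Real.exp 21 := by
    rw [← Real.exp_nat_mul]; norm_num
  have h2 : Real.exp 21 = Real.exp 1 ^ (21:ℕ) := by
    rw [← Real.exp_nat_mul]; norm_num
  have h3 : Real.exp 1 ^ (21:ℕ) < 2.7182818286 ^ (21:ℕ) :=
    pow_lt_pow_left₀ Real.exp_one_lt_d9 (Real.exp_pos 1).le (by norm_num)
  have h4 : (2.7182818286:ℝ) ^ (21:ℕ) < 8.2 ^ (10:ℕ) := by norm_num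
  have h5 : Real.exp (21/10) ^ (10:ℕ) < (8.2:ℝ) ^ (10:ℕ) := by
    rw [h1, h2]; linarith
  exact lt_of_pow_lt_pow_left₀ 10 (by norm_num) h5

lemma BY_pow82 : ∀ n : ℕ, 8 ≤ n → 2 * (8.2:ℝ)^n ≤ 9^n := by
  intro n hn
  induction n, hn using Nat.le_induction with
  | base => norm_num
  | succ k hk ih =>
    have h82 : (0:ℝ) < 8.2 := by norm_num
    calc 2 * (8.2:ℝ)^(k+1) = 8.2 * (2 * 8.2^k) := by ring
    _ ≤ 8.2 * 9^k := by nlinarith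
    _ ≤ 9 * 9^k := by nlinarith [pow_pos (show (0:ℝ) < 9 by norm_num) k]
    _ = 9^(k+1) := by ring

lemma BY_exp_le {n : ℕ} (hn : 8 ≤ n) :
    Real.exp (11/10 * (n:ℝ)) ≤ (9:ℝ)^n / 2 * Real.exp (-(n:ℝ)) := by
  have key : Real.exp (21/10 * (n:ℝ)) ≤ (9:ℝ)^n / 2 := by
    have h1 : Real.exp (21/10 * (n:ℝ)) = Real.exp (21/10) ^ n := by
      rw [← Real.exp_nat_mul]; ring_nf
    have h2 : Real.exp (21/10) ^ n ≤ (8.2:ℝ)^n :=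
      pow_le_pow_left₀ (Real.exp_pos _).le BY_exp21.le n
    have h3 := BY_pow82 n hn
    rw [h1]; linarith
  have hpos := Real.exp_pos (-(n:ℝ))
  have h4 : Real.exp (11/10 * (n:ℝ)) = Real.exp (21/10 * (n:ℝ)) * Real.exp (-(n:ℝ)) := by
    rw [← Real.exp_add]; ring_nf
  nlinarith

lemma BY_tail (c : ℝ) (m : ℕ → ℕ) (hm : ∀ n, 9^n ≤ m n) :
    Tendsto (fun n : ℕ => BYg c n (m n) / (BYt c n - 1)) atTop (𝓝 0) := by
  apply tendsto_of_tendsto_of_tendsto_of_le_of_le' tendsto_const_nhds (BY_hC0 c)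
  · filter_upwards [BY_t_gt c, eventually_ge_atTop 2] with n ht hn
    apply div_nonneg _ (by linarith)
    apply Real.rpow_nonneg
    have h1 : (1:ℝ) ≤ (m n : ℝ) := by
      exact_mod_cast (Nat.one_le_pow n 9 (by norm_num)).trans (hm n)
    have := Real.exp_pos (-(n:ℝ))
    have := Real.exp_pos ((n:ℝ))
    nlinarith
  · filter_upwards [BY_t_gt c, eventually_ge_atTop 8] with n ht hn
    have hb : Real.exp (11/10 * (n:ℝ)) ≤ Real.exp n + ((m n : ℝ) - 1) * Real.exp (-(n:ℝ)) := by
      have h9 : ((9:ℝ))^n ≤ (m n : ℝ) := by exact_mod_cast hm n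
      have h2 : ((9:ℝ))^n / 2 ≤ (m n : ℝ) - 1 := by
        have : (2:ℝ) ≤ 9^n := by
          calc (2:ℝ) ≤ 9^1 := by norm_num
          _ ≤ 9^n := pow_le_pow_right₀ (by norm_num) (by omega)
        linarith
      have h3 := BY_exp_le hn
      have he := Real.exp_pos (-(n:ℝ))
      nlinarith [Real.exp_pos (n:ℝ)]
    have hgle : BYg c n (m n) ≤ Real.exp (11/10 * (n:ℝ) * (1 - BYt c n)) := by
      have := Real.rpow_le_rpow_of_nonpos (Real.exp_pos (11/10 * (n:ℝ))) hb (by linarith : 1 - BYt c n ≤ 0)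
      rw [Real.rpow_def_of_pos (Real.exp_pos _), Real.log_exp] at this
      exact this
    exact (div_le_div_iff_of_pos_right (by linarith)).mpr hgle

lemma BY_tele1 (f : ℕ → ℝ) (M : ℕ) (hM : 1 ≤ M) :
    ∑ i ∈ Finset.Icc 2 M, (f i - f (i+1)) = f 2 - f (M+1) := by
  induction M, hM using Nat.le_induction with
  | base => simp
  | succ k hk ih =>
    rw [Finset.sum_Icc_succ_top (by omega), ih]
    ring

lemma BY_tele2 (f : ℕ → ℝ) (M : ℕ) (hM : 1 ≤ M) :
    ∑ i ∈ Finset.Icc 2 M, (f (i-1) - f i) = f 1 - f M := by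
  induction M, hM using Nat.le_induction with
  | base => simp
  | succ k hk ih =>
    rw [Finset.sum_Icc_succ_top (by omega), ih]
    have : k + 1 - 1 = k := by omega
    rw [this]
    ring

lemma BY_sum_bounds (c : ℝ) {n : ℕ} (hn : 2 ≤ n) (ht : 1 < BYt c n) :
    BYg c n 2 - BYg c n (9^n+1) ≤ (BYt c n - 1) *
      (∑ i ∈ Finset.Icc (2:ℕ) (9^n), Real.exp (-(n:ℝ)) *
        Real.exp (-Real.log (Real.exp n + ((i:ℝ)-1)*Real.exp (-(n:ℝ))) * BYt c n)) ∧
    (BYt c n - 1) *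
      (∑ i ∈ Finset.Icc (2:ℕ) (9^n), Real.exp (-(n:ℝ)) *
        Real.exp (-Real.log (Real.exp n + ((i:ℝ)-1)*Real.exp (-(n:ℝ))) * BYt c n))
      ≤ BYg c n 1 - BYg c n (9^n) := by
  set t := BYt c n with htdef
  set e := Real.exp (-(n:ℝ)) with hedef
  have he : 0 < e := Real.exp_pos _
  set u : ℕ → ℝ := fun i => Real.exp n + ((i:ℝ)-1) * e with hu
  have hupos : ∀ i : ℕ, 1 ≤ i → 0 < u i := by
    intro i hi
    have h1 : (1:ℝ) ≤ (i:ℝ) := by exact_mod_cast hi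
    have : (0:ℝ) ≤ (i:ℝ) - 1 := by linarith
    exact add_pos_of_pos_of_nonneg (Real.exp_pos _) (mul_nonneg this he.le)
  have husucc : ∀ i : ℕ, u (i+1) = u i + e := by
    intro i
    simp only [hu]
    push_cast
    ring
  have hconv : ∑ i ∈ Finset.Icc (2:ℕ) (9^n), e *
        Real.exp (-Real.log (Real.exp n + ((i:ℝ)-1)*e) * t)
      = ∑ i ∈ Finset.Icc (2:ℕ) (9^n), e * u i ^ (-t) := by
    apply Finset.sum_congr rfl
    intro i hi
    rw [Finset.mem_Icc] at hi
    congr 1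
    rw [Real.rpow_def_of_pos (hupos i (by omega))]
    congr 1
    ring
  have hM : 1 ≤ 9^n := Nat.one_le_pow _ _ (by norm_num)
  have hgu : ∀ i : ℕ, BYg c n i = u i ^ (1-t) := fun i => rfl
  constructor
  · rw [hconv, Finset.mul_sum, hgu, hgu]
    have hstep : ∀ i ∈ Finset.Icc (2:ℕ) (9^n),
        u i ^ (1-t) - u (i+1) ^ (1-t) ≤ (t-1) * (e * u i ^ (-t)) := by
      intro i hi
      rw [Finset.mem_Icc] at hi
      have h := (key_ineq t ht (u i) (u i + e) (hupos i (by omega)) (by linarith)).2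
      simp only [add_sub_cancel_left] at h
      rw [husucc]
      exact h
    calc u 2 ^ (1-t) - u (9^n+1) ^ (1-t)
        = ∑ i ∈ Finset.Icc (2:ℕ) (9^n), (u i ^ (1-t) - u (i+1) ^ (1-t)) := by
          rw [BY_tele1 (fun i => u i ^ (1-t)) (9^n) hM]
    _ ≤ ∑ i ∈ Finset.Icc (2:ℕ) (9^n), (t-1) * (e * u i ^ (-t)) := Finset.sum_le_sum hstep
  · rw [hconv, Finset.mul_sum, hgu, hgu]
    have hstep : ∀ i ∈ Finset.Icc (2:ℕ) (9^n),
        (t-1) * (e * u i ^ (-t)) ≤ u (i-1) ^ (1-t) - u i ^ (1-t) := by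
      intro i hi
      rw [Finset.mem_Icc] at hi
      have h1 : u i = u (i-1) + e := by
        have := husucc (i-1)
        rw [show i-1+1 = i by omega] at this
        exact this
      have h := (key_ineq t ht (u (i-1)) (u (i-1) + e) (hupos _ (by omega)) (by linarith)).1
      simp only [add_sub_cancel_left] at h
      rw [← h1] at h
      exact h
    calc ∑ i ∈ Finset.Icc (2:ℕ) (9^n), (t-1) * (e * u i ^ (-t))
        ≤ ∑ i ∈ Finset.Icc (2:ℕ) (9^n), (u (i-1) ^ (1-t) - u i ^ (1-t)) := Finset.sum_le_sum hstep
    _ = u 1 ^ (1-t) - u (9^n) ^ (1-t) := BY_tele2 (fun i => u i ^ (1-t)) (9^n) hM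

lemma BY_g1 (c : ℝ) (n : ℕ) : BYg c n 1 = Real.exp ((n:ℝ) * (1 - BYt c n)) := by
  unfold BYg
  norm_num
  rw [Real.rpow_def_of_pos (Real.exp_pos _), Real.log_exp]

lemma BY_Up (c : ℝ) :
    Tendsto (fun n : ℕ => (BYg c n 1 - BYg c n (9^n)) / (BYt c n - 1)) atTop
      (𝓝 (Real.exp (-c))) := by
  have h := (BY_hA c).sub (BY_tail c (fun n => 9^n) (fun n => le_refl _))
  rw [sub_zero] at h
  apply h.congr fun n => ?_
  rw [← BY_g1, div_sub_div_same]

lemma BY_g2 (c : ℝ) (n : ℕ) :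
    BYg c n 2 = Real.exp ((n:ℝ) * (1 - BYt c n)) *
      (1 + Real.exp (-(2*(n:ℝ)))) ^ (1 - BYt c n) := by
  unfold BYg
  have h1 : Real.exp (n:ℝ) + (((2:ℕ):ℝ) - 1) * Real.exp (-(n:ℝ))
      = Real.exp (n:ℝ) * (1 + Real.exp (-(2*(n:ℝ)))) := by
    rw [mul_add, mul_one, ← Real.exp_add]
    norm_num
    ring_nf
  rw [h1, Real.mul_rpow (Real.exp_pos _).le (by positivity)]
  rw [Real.rpow_def_of_pos (Real.exp_pos _), Real.log_exp]

lemma BY_Lo (c : ℝ) :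
    Tendsto (fun n : ℕ => (BYg c n 2 - BYg c n (9^n+1)) / (BYt c n - 1)) atTop
      (𝓝 (Real.exp (-c))) := by
  have hbase : Tendsto (fun n : ℕ => 1 + Real.exp (-(2*(n:ℝ)))) atTop (𝓝 1) := by
    have h1 : Tendsto (fun n : ℕ => -(2*(n:ℝ))) atTop atBot :=
      tendsto_neg_atTop_atBot.comp (BY_hN.const_mul_atTop two_pos)
    have := (tendsto_const_nhds (x := (1:ℝ))).add (Real.tendsto_exp_atBot.comp h1)
    simpa using this
  have hexpo : Tendsto (fun n : ℕ => 1 - BYt c n) atTop (𝓝 0) := by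
    have := (tendsto_const_nhds (x := (1:ℝ))).sub (BY_t_lim c)
    simpa using this
  have hF : Tendsto (fun n : ℕ => (1 + Real.exp (-(2*(n:ℝ)))) ^ (1 - BYt c n)) atTop (𝓝 1) := by
    have := hbase.rpow hexpo (Or.inl one_ne_zero)
    simpa using this
  have hg2 : Tendsto (fun n : ℕ => BYg c n 2 / (BYt c n - 1)) atTop (𝓝 (Real.exp (-c))) := by
    have h := (BY_hA c).mul hF
    rw [mul_one] at h
    apply h.congr fun n => ?_
    rw [BY_g2, mul_div_right_comm]
  have h := hg2.sub (BY_tail c (fun n => 9^n+1) (fun n => Nat.le_succ _))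
  rw [sub_zero] at h
  exact h.congr fun n => by rw [div_sub_div_same]


/-- Case `β_n ≡ 1` of Barrera–Ycart: a profile cutoff at `(t_n, w_n)` with
profile `F(c) = 2 e^{-c}` occurs: for every real `c`,
`d_n(t_n + c w_n) → 2 e^{-c}`. -/
theorem profile_cutoff_beta_one
    (β : ℕ → ℝ) (hβ : ∀ n, β n = 1) (c : ℝ) :
    Tendsto (fun n => dCut β n (cutT β n + c * cutW β n)) atTop
      (𝓝 (2 * Real.exp (-c))) := by
  have hS : Tendsto (fun n : ℕ => ∑ i ∈ Finset.Icc (2:ℕ) (9^n), Real.exp (-(n:ℝ)) *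
        Real.exp (-Real.log (Real.exp n + ((i:ℝ)-1)*Real.exp (-(n:ℝ))) * BYt c n)) atTop
      (𝓝 (Real.exp (-c))) := by
    apply tendsto_of_tendsto_of_tendsto_of_le_of_le' (BY_Lo c) (BY_Up c)
    · filter_upwards [BY_t_gt c, eventually_ge_atTop 2] with n ht hn
      rw [div_le_iff₀ (by linarith : (0:ℝ) < BYt c n - 1)]
      linarith [(BY_sum_bounds c hn ht).1]
    · filter_upwards [BY_t_gt c, eventually_ge_atTop 2] with n ht hn
      rw [le_div_iff₀ (by linarith : (0:ℝ) < BYt c n - 1)]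
      linarith [(BY_sum_bounds c hn ht).2]
  have hfinal := (tendsto_const_nhds (x := Real.exp (-c))).add hS
  have h2 : Real.exp (-c) + Real.exp (-c) = 2 * Real.exp (-c) := by ring
  rw [h2] at hfinal
  apply hfinal.congr'
  filter_upwards [eventually_ge_atTop 2] with n hn
  have hpt : cutT β n + c * cutW β n = BYt c n := by
    simp only [cutW, cutT, BYt, hβ n]
    ring
  simp only [dCut]
  rw [hpt, hβ n]
  congr 1
  have hn0 : (n:ℝ) ≠ 0 := ne_of_gt (BY_npos hn)
  have hQpos : (0:ℝ) < 1 + ell n / n := by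
    have h1 : (0:ℝ) ≤ ell n / n := div_nonneg (BY_ell_pos hn).le (BY_npos hn).le
    linarith
  have hQ0 : (1 + ell n / (n:ℝ)) ≠ 0 := ne_of_gt hQpos
  have harg : -((n:ℝ) / (1 + 1/(n:ℝ) * ell n)) * BYt c n = -(n:ℝ) - c := by
    have hQ : 1 + (1:ℝ)/(n:ℝ) * ell n = 1 + ell n / (n:ℝ) := by ring
    rw [hQ]
    have e1 : (n:ℝ) / (1 + ell n/(n:ℝ)) * ((1 + ell n/(n:ℝ)) * (1 + c/(n:ℝ)))
        = (n:ℝ) * (1 + c/(n:ℝ)) * ((1 + ell n/(n:ℝ)) / (1 + ell n/(n:ℝ))) := by ring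
    rw [div_self hQ0, mul_one] at e1
    have e2 : (n:ℝ) * (1 + c/(n:ℝ)) = (n:ℝ) + c := by
      rw [mul_add, mul_one, mul_comm ((n:ℝ)) (c/(n:ℝ)), div_mul_cancel₀ c hn0]
    show -((n:ℝ) / (1 + ell n/(n:ℝ))) * ((1 + ell n/(n:ℝ)) * (1 + c/(n:ℝ))) = -(n:ℝ) - c
    rw [neg_mul, e1, e2]
    ring
  rw [harg, ← Real.exp_add]
  congr 1
  ring
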